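/- Let N be a strongly connected symmetric directed graph on m vertices where each arc (j,i) carries a real matrix C_{ji} with n columns, and suppose the weighted graph is well-configured, i.e., kernel(C J̄ᵀ) = span(Ī). Let each agent update x_i(t+1) = x_i(t) − α(t) ∑_{j∈N_i} (C_{ij}ᵀC_{ij} + C_{ji}ᵀC_{ji})(x_i(t) − x_j(t)), where α(t) > 0 satisfies ∑_t α(t) = ∞ and ∑_t α(t)² < ∞. Then all m agents' states x_i(t) converge, as t → ∞, to a common limit vector in ℝ^n. -/

import Mathlib

open Filter Matrix

section Stmt6Aux

lemma stmt6_scalar_conv (μ : ℝ) (hμ : 0 < μ) (α : ℕ → ℝ)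
    (hα0 : Tendsto α atTop (nhds 0))
    (hαdiv : Tendsto (fun T => ∑ t ∈ Finset.range T, α t) atTop atTop)
    (c : ℕ → ℝ) (hc : ∀ t, c (t + 1) = (1 - α t * μ) * c t) :
    Tendsto c atTop (nhds 0) := by
  set S : ℕ → ℝ := fun T => ∑ t ∈ Finset.range T, α t with hS
  obtain ⟨t₀, ht₀⟩ : ∃ t₀, ∀ t ≥ t₀, α t * μ ≤ 1 := by
    have h1 : ∀ᶠ t in atTop, α t < 1 / μ := hα0.eventually (eventually_lt_nhds (by positivity))
    obtain ⟨t₀, ht₀⟩ := eventually_atTop.mp h1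
    exact ⟨t₀, fun t ht => le_of_lt ((lt_div_iff₀ hμ).mp (ht₀ t ht))⟩
  have key : ∀ t ≥ t₀, |c t| ≤ |c t₀| * Real.exp (-(μ * (S t - S t₀))) := by
    intro t ht
    induction t, ht using Nat.le_induction with
    | base => simp
    | succ t ht ih =>
      have h1 : 0 ≤ 1 - α t * μ := by linarith [ht₀ t ht]
      have h2 : (1 - α t * μ) ≤ Real.exp (-(α t * μ)) := by
        have := Real.add_one_le_exp (-(α t * μ)); linarith
      have hst : S (t + 1) = S t + α t := by simp [hS, Finset.sum_range_succ]
      calc |c (t + 1)| = (1 - α t * μ) * |c t| := by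
            rw [hc t, abs_mul, abs_of_nonneg h1]
        _ ≤ Real.exp (-(α t * μ)) * (|c t₀| * Real.exp (-(μ * (S t - S t₀)))) := by
            apply mul_le_mul h2 ih (abs_nonneg _) (Real.exp_nonneg _)
        _ = |c t₀| * Real.exp (-(μ * (S (t + 1) - S t₀))) := by
            rw [hst]; rw [← mul_assoc, mul_comm (Real.exp _) (|c t₀|), mul_assoc,
              ← Real.exp_add]; ring_nf
  have hg : Tendsto (fun t => |c t₀| * Real.exp (-(μ * (S t - S t₀)))) atTop (nhds 0) := by
    have h1 : Tendsto (fun t => -(μ * (S t - S t₀))) atTop atBot := by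
      apply Filter.tendsto_neg_atBot_iff.mpr
      exact (tendsto_atTop_add_const_right atTop (-S t₀) hαdiv).const_mul_atTop hμ
    have := (Real.tendsto_exp_atBot).comp h1
    simpa using this.const_mul (|c t₀|)
  rw [tendsto_zero_iff_abs_tendsto_zero]
  exact squeeze_zero' (Eventually.of_forall fun t => abs_nonneg _)
    (eventually_atTop.mpr ⟨t₀, key⟩) hg

variable {m n : ℕ} (A : Finset (Fin m × Fin m)) (k : Fin m → Fin m → ℕ)
  (C : (j i : Fin m) → Matrix (Fin (k j i)) (Fin n) ℝ)

def stmt6rowv (y : EuclideanSpace ℝ (Fin m × Fin n)) (i : Fin m) : Fin n → ℝ := fun l => y (i, l)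

lemma stmt6rowv_add (y z : EuclideanSpace ℝ (Fin m × Fin n)) (i : Fin m) :
    stmt6rowv (y + z) i = stmt6rowv y i + stmt6rowv z i := rfl

lemma stmt6rowv_smul (r : ℝ) (y : EuclideanSpace ℝ (Fin m × Fin n)) (i : Fin m) :
    stmt6rowv (r • y) i = r • stmt6rowv y i := rfl

def stmt6M (i j : Fin m) : Matrix (Fin n) (Fin n) ℝ := (C i j)ᵀ * C i j + (C j i)ᵀ * C j i

lemma stmt6M_symm (i j : Fin m) : stmt6M k C i j = stmt6M k C j i := add_comm _ _

noncomputable def stmt6L :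
    EuclideanSpace ℝ (Fin m × Fin n) →ₗ[ℝ] EuclideanSpace ℝ (Fin m × Fin n) where
  toFun y := WithLp.toLp 2 fun p : Fin m × Fin n =>
    (∑ j ∈ Finset.univ.filter (fun j : Fin m => (j, p.1) ∈ A),
      (stmt6M k C p.1 j).mulVec (stmt6rowv y p.1 - stmt6rowv y j)) p.2
  map_add' y z := by
    ext p
    show (∑ j ∈ Finset.univ.filter (fun j : Fin m => (j, p.1) ∈ A),
        (stmt6M k C p.1 j).mulVec (stmt6rowv (y + z) p.1 - stmt6rowv (y + z) j)) p.2
      = (∑ j ∈ Finset.univ.filter (fun j : Fin m => (j, p.1) ∈ A),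
        (stmt6M k C p.1 j).mulVec (stmt6rowv y p.1 - stmt6rowv y j)) p.2
      + (∑ j ∈ Finset.univ.filter (fun j : Fin m => (j, p.1) ∈ A),
        (stmt6M k C p.1 j).mulVec (stmt6rowv z p.1 - stmt6rowv z j)) p.2
    simp only [Finset.sum_apply, ← Finset.sum_add_distrib]
    refine Finset.sum_congr rfl fun j _ => ?_
    rw [stmt6rowv_add, stmt6rowv_add,
      show stmt6rowv y p.1 + stmt6rowv z p.1 - (stmt6rowv y j + stmt6rowv z j)
        = (stmt6rowv y p.1 - stmt6rowv y j) + (stmt6rowv z p.1 - stmt6rowv z j) by abel,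
      Matrix.mulVec_add]
    rfl
  map_smul' r y := by
    ext p
    show (∑ j ∈ Finset.univ.filter (fun j : Fin m => (j, p.1) ∈ A),
        (stmt6M k C p.1 j).mulVec (stmt6rowv (r • y) p.1 - stmt6rowv (r • y) j)) p.2
      = r * (∑ j ∈ Finset.univ.filter (fun j : Fin m => (j, p.1) ∈ A),
        (stmt6M k C p.1 j).mulVec (stmt6rowv y p.1 - stmt6rowv y j)) p.2
    simp only [Finset.sum_apply, Finset.mul_sum]
    refine Finset.sum_congr rfl fun j _ => ?_
    rw [stmt6rowv_smul, stmt6rowv_smul, ← smul_sub, Matrix.mulVec_smul]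
    rfl

lemma stmt6L_apply (y : EuclideanSpace ℝ (Fin m × Fin n)) (p : Fin m × Fin n) :
    stmt6L A k C y p = (∑ j ∈ Finset.univ.filter (fun j : Fin m => (j, p.1) ∈ A),
      (stmt6M k C p.1 j).mulVec (stmt6rowv y p.1 - stmt6rowv y j)) p.2 := rfl

lemma stmt6_sum_filter_arcs (F : Fin m → Fin m → ℝ) :
    ∑ i : Fin m, ∑ j ∈ Finset.univ.filter (fun j : Fin m => (j, i) ∈ A), F j i
      = ∑ a ∈ A, F a.1 a.2 := by
  rw [Finset.sum_finset_product_right A Finset.univ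
    (fun i => Finset.univ.filter (fun j : Fin m => (j, i) ∈ A))
    (fun p => by simp)]

lemma stmt6_inner_L (x y : EuclideanSpace ℝ (Fin m × Fin n)) :
    (inner ℝ (stmt6L A k C x) y : ℝ) =
      ∑ a ∈ A, (stmt6M k C a.2 a.1).mulVec (stmt6rowv x a.2 - stmt6rowv x a.1)
        ⬝ᵥ stmt6rowv y a.2 := by
  rw [PiLp.inner_apply]
  simp only [RCLike.inner_apply, starRingEnd_apply, star_trivial]
  rw [Fintype.sum_prod_type]
  rw [← stmt6_sum_filter_arcs A
    (fun j i => (stmt6M k C i j).mulVec (stmt6rowv x i - stmt6rowv x j) ⬝ᵥ stmt6rowv y i)]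
  refine Finset.sum_congr rfl fun i _ => ?_
  simp only [stmt6L_apply, Finset.sum_apply, Finset.sum_mul, dotProduct, stmt6rowv]
  rw [Finset.sum_comm]
  simp only [Finset.mul_sum, mul_comm]

lemma stmt6_sum_swap_arcs (hsym : ∀ p ∈ A, (p.2, p.1) ∈ A) (G : Fin m × Fin m → ℝ) :
    ∑ a ∈ A, G a = ∑ a ∈ A, G (a.2, a.1) := by
  refine Finset.sum_nbij' (fun a => (a.2, a.1)) (fun a => (a.2, a.1))
    (fun a ha => hsym a ha) (fun a ha => hsym a ha)
    (fun a _ => rfl) (fun a _ => rfl) (fun a _ => rfl)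

lemma stmt6M_mulVec_dot (i j : Fin m) (u v : Fin n → ℝ) :
    stmt6M k C i j *ᵥ u ⬝ᵥ v = (C i j *ᵥ u) ⬝ᵥ (C i j *ᵥ v) + (C j i *ᵥ u) ⬝ᵥ (C j i *ᵥ v) := by
  rw [stmt6M, add_mulVec, add_dotProduct]
  congr 1 <;>
  · rw [← mulVec_mulVec, dotProduct_comm, dotProduct_mulVec, ← mulVec_transpose,
      transpose_transpose, dotProduct_comm]

lemma stmt6M_dot_symm (i j : Fin m) (u v : Fin n → ℝ) :
    stmt6M k C i j *ᵥ u ⬝ᵥ v = stmt6M k C i j *ᵥ v ⬝ᵥ u := by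
  rw [stmt6M_mulVec_dot, stmt6M_mulVec_dot, dotProduct_comm, dotProduct_comm (C j i *ᵥ u)]

lemma stmt6M_quad_nonneg (i j : Fin m) (u : Fin n → ℝ) :
    0 ≤ stmt6M k C i j *ᵥ u ⬝ᵥ u := by
  rw [stmt6M_mulVec_dot]
  have h1 : ∀ (p : ℕ) (w : Fin p → ℝ), 0 ≤ w ⬝ᵥ w := fun p w =>
    Finset.sum_nonneg fun l _ => mul_self_nonneg _
  exact add_nonneg (h1 _ _) (h1 _ _)

lemma stmt6M_quad_eq_zero (i j : Fin m) (u : Fin n → ℝ)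
    (h : stmt6M k C i j *ᵥ u ⬝ᵥ u = 0) : C i j *ᵥ u = 0 ∧ C j i *ᵥ u = 0 := by
  rw [stmt6M_mulVec_dot] at h
  have h1 : ∀ (p : ℕ) (w : Fin p → ℝ), 0 ≤ w ⬝ᵥ w := fun p w =>
    Finset.sum_nonneg fun l _ => mul_self_nonneg _
  have h2 : (C i j *ᵥ u) ⬝ᵥ (C i j *ᵥ u) = 0 :=
    le_antisymm (by linarith [h1 _ (C j i *ᵥ u)]) (h1 _ _)
  have h3 : (C j i *ᵥ u) ⬝ᵥ (C j i *ᵥ u) = 0 := by linarith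
  exact ⟨dotProduct_self_eq_zero.mp h2, dotProduct_self_eq_zero.mp h3⟩

lemma stmt6_two_inner_L (hsym : ∀ p ∈ A, (p.2, p.1) ∈ A)
    (x y : EuclideanSpace ℝ (Fin m × Fin n)) :
    2 * (inner ℝ (stmt6L A k C x) y : ℝ) =
      ∑ a ∈ A, (stmt6M k C a.2 a.1).mulVec (stmt6rowv x a.2 - stmt6rowv x a.1)
        ⬝ᵥ (stmt6rowv y a.2 - stmt6rowv y a.1) := by
  have h1 := stmt6_inner_L A k C x y
  have h2 : (inner ℝ (stmt6L A k C x) y : ℝ) =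
      ∑ a ∈ A, -((stmt6M k C a.2 a.1).mulVec (stmt6rowv x a.2 - stmt6rowv x a.1)
        ⬝ᵥ stmt6rowv y a.1) := by
    rw [h1, stmt6_sum_swap_arcs A hsym]
    refine Finset.sum_congr rfl fun a _ => ?_
    rw [← stmt6M_symm k C a.2 a.1,
      show stmt6rowv x a.1 - stmt6rowv x a.2 = -(stmt6rowv x a.2 - stmt6rowv x a.1) by abel,
      Matrix.mulVec_neg, neg_dotProduct]
  have : 2 * (inner ℝ (stmt6L A k C x) y : ℝ)
      = (inner ℝ (stmt6L A k C x) y : ℝ) + (inner ℝ (stmt6L A k C x) y : ℝ) := by ring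
  rw [this]
  nth_rewrite 1 [h1]
  rw [h2, ← Finset.sum_add_distrib]
  refine Finset.sum_congr rfl fun a _ => ?_
  rw [dotProduct_sub]
  ring

lemma stmt6L_isSymmetric (hsym : ∀ p ∈ A, (p.2, p.1) ∈ A) :
    (stmt6L A k C).IsSymmetric := by
  intro u v
  have h1 := stmt6_two_inner_L A k C hsym u v
  have h2 := stmt6_two_inner_L A k C hsym v u
  have h3 : (2 : ℝ) * inner ℝ (stmt6L A k C u) v = 2 * inner ℝ (stmt6L A k C v) u := by
    rw [h1, h2]
    exact Finset.sum_congr rfl fun a _ => stmt6M_dot_symm k C _ _ _ _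
  have h4 : (inner ℝ (stmt6L A k C u) v : ℝ) = inner ℝ (stmt6L A k C v) u := by linarith
  rw [h4]
  exact real_inner_comm _ _

lemma stmt6_quad_nonneg (hsym : ∀ p ∈ A, (p.2, p.1) ∈ A)
    (x : EuclideanSpace ℝ (Fin m × Fin n)) :
    0 ≤ (inner ℝ (stmt6L A k C x) x : ℝ) := by
  have h := stmt6_two_inner_L A k C hsym x x
  have h2 : 0 ≤ 2 * (inner ℝ (stmt6L A k C x) x : ℝ) := by
    rw [h]
    exact Finset.sum_nonneg fun a _ => stmt6M_quad_nonneg k C _ _ _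
  linarith

lemma stmt6_ker (hsym : ∀ p ∈ A, (p.2, p.1) ∈ A)
    (v : EuclideanSpace ℝ (Fin m × Fin n)) (hv : stmt6L A k C v = 0) :
    ∀ j i : Fin m, (j, i) ∈ A → (C j i).mulVec (stmt6rowv v j - stmt6rowv v i) = 0 := by
  intro j i hji
  have h0 : ∑ a ∈ A, (stmt6M k C a.2 a.1).mulVec (stmt6rowv v a.2 - stmt6rowv v a.1)
      ⬝ᵥ (stmt6rowv v a.2 - stmt6rowv v a.1) = 0 := by
    rw [← stmt6_two_inner_L A k C hsym v v, hv]
    simp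
  have hterm := (Finset.sum_eq_zero_iff_of_nonneg
    (fun a _ => stmt6M_quad_nonneg k C a.2 a.1 _)).mp h0 (j, i) hji
  obtain ⟨_, hB⟩ := stmt6M_quad_eq_zero k C i j _ hterm
  rw [show stmt6rowv v j - stmt6rowv v i = -(stmt6rowv v i - stmt6rowv v j) by abel,
    Matrix.mulVec_neg, hB, neg_zero]

end Stmt6Aux

/-- On a strongly connected symmetric directed graph (arc set `A`, matrix `C j i`
on arc `(j,i)`) that is well-configured (`kernel (C J̄ᵀ) = span Ī`, i.e. local agreement holds
exactly on consensus vectors), the diminishing-stepsize gradient algorithm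
`x i (t+1) = x i t − α t • ∑_{j ∈ N_i} (C i jᵀ C i j + C j iᵀ C j i) (x i t − x j t)`
with `α t > 0`, `∑ α t = ∞`, `∑ (α t)² < ∞`, drives all agents to a common limit. -/
theorem stmt_6 (m n : ℕ) (A : Finset (Fin m × Fin m))
    (hsym : ∀ p ∈ A, (p.2, p.1) ∈ A)
    (hsc : ∀ u v : Fin m, Relation.ReflTransGen (fun a b => (a, b) ∈ A) u v)
    (k : Fin m → Fin m → ℕ)
    (C : (j i : Fin m) → Matrix (Fin (k j i)) (Fin n) ℝ)
    (hwc : ∀ x : Fin m → (Fin n → ℝ),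
      (∀ j i : Fin m, (j, i) ∈ A → (C j i).mulVec (x j - x i) = 0) ↔
        ∃ z : Fin n → ℝ, ∀ i, x i = z)
    (α : ℕ → ℝ) (hαpos : ∀ t, 0 < α t)
    (hαdiv : Tendsto (fun T => ∑ t ∈ Finset.range T, α t) atTop atTop)
    (hαsq : Summable fun t => (α t) ^ 2)
    (x : ℕ → Fin m → (Fin n → ℝ))
    (hupd : ∀ t (i : Fin m), x (t + 1) i = x t i -
      α t • ∑ j ∈ Finset.univ.filter (fun j : Fin m => (j, i) ∈ A),
        ((C i j)ᵀ * C i j + (C j i)ᵀ * C j i).mulVec (x t i - x t j)) :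
    ∃ z : Fin n → ℝ, ∀ i : Fin m, Tendsto (fun t => x t i) atTop (nhds z) := by
  classical
  -- the stacked state
  set X : ℕ → EuclideanSpace ℝ (Fin m × Fin n) := fun t => WithLp.toLp 2 fun p : Fin m × Fin n => x t p.1 p.2 with hX
  have hrow : ∀ t i, stmt6rowv (X t) i = x t i := fun t i => rfl
  -- stacked update
  have hXupd : ∀ t, X (t + 1) = X t - α t • stmt6L A k C (X t) := by
    intro t
    ext p
    show x (t + 1) p.1 p.2 = X t p - (α t • stmt6L A k C (X t)) p
    rw [hupd t p.1]
    rfl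
  -- diagonalize
  have hsymL : (stmt6L A k C).IsSymmetric := stmt6L_isSymmetric A k C hsym
  have hN : Module.finrank ℝ (EuclideanSpace ℝ (Fin m × Fin n))
      = Module.finrank ℝ (EuclideanSpace ℝ (Fin m × Fin n)) := rfl
  set b := hsymL.eigenvectorBasis hN with hb
  set μ := hsymL.eigenvalues hN with hμdef
  have heig : ∀ i, stmt6L A k C (b i) = μ i • b i := fun i => by
    have h := hsymL.apply_eigenvectorBasis hN i
    exact_mod_cast h
  have hμnonneg : ∀ i, 0 ≤ μ i := by
    intro i
    have h1 := stmt6_quad_nonneg A k C hsym (b i)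
    rw [heig i, real_inner_smul_left, real_inner_self_eq_norm_sq, b.orthonormal.1 i] at h1
    simpa using h1
  -- coordinates
  set c : _ → ℕ → ℝ := fun i t => b.repr (X t) i with hc
  have hcrec : ∀ i t, c i (t + 1) = (1 - α t * μ i) * c i t := by
    intro i t
    have h1 : c i (t + 1) = b.repr (X t) i - α t * b.repr (stmt6L A k C (X t)) i := by
      rw [hc]
      simp only [hXupd t, map_sub, _root_.map_smul, PiLp.sub_apply, PiLp.smul_apply,
        smul_eq_mul]
    rw [h1, hsymL.eigenvectorBasis_apply_self_apply hN (X t) i]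
    simp only [RCLike.ofReal_real_eq_id, id_eq]
    ring
  -- α tends to 0
  have hα0 : Tendsto α atTop (nhds 0) := by
    have h1 := hαsq.tendsto_atTop_zero
    have h2 := (Real.continuous_sqrt.tendsto' 0 0 (by simp)).comp h1
    refine h2.congr fun t => ?_
    exact Real.sqrt_sq (hαpos t).le
  -- limit coordinates
  set cl : _ → ℝ := fun i => if μ i = 0 then c i 0 else 0 with hcl
  have hclim : ∀ i, Tendsto (fun t => c i t) atTop (nhds (cl i)) := by
    intro i
    by_cases hzero : μ i = 0
    · have hconst : ∀ t, c i t = c i 0 := by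
        intro t
        induction t with
        | zero => rfl
        | succ t ih => rw [hcrec i t, hzero]; simpa using ih
      rw [hcl]
      simp only [hzero, if_true]
      exact Tendsto.congr (fun t => (hconst t).symm) tendsto_const_nhds
    · have hpos : 0 < μ i := lt_of_le_of_ne (hμnonneg i) (Ne.symm hzero)
      rw [hcl]
      simp only [hzero, if_false]
      exact stmt6_scalar_conv (μ i) hpos α hα0 hαdiv (fun t => c i t) (hcrec i)
  -- limit point
  set Xinf : EuclideanSpace ℝ (Fin m × Fin n) := ∑ i, cl i • b i with hXinf
  have hXlim : Tendsto X atTop (nhds Xinf) := by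
    have h1 : ∀ t, X t = ∑ i, c i t • b i := fun t => (b.sum_repr (X t)).symm
    rw [hXinf]
    refine Tendsto.congr (fun t => (h1 t).symm) ?_
    exact tendsto_finset_sum _ fun i _ => (hclim i).smul_const (b i)
  have hLXinf : stmt6L A k C Xinf = 0 := by
    rw [hXinf, map_sum]
    refine Finset.sum_eq_zero fun i _ => ?_
    rw [_root_.map_smul, heig i]
    by_cases hzero : μ i = 0
    · rw [hzero]; simp
    · rw [hcl]; simp [hzero]
  -- Xinf is a consensus vector
  obtain ⟨z, hz⟩ := (hwc (fun i => stmt6rowv Xinf i)).mp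
    (stmt6_ker A k C hsym Xinf hLXinf)
  refine ⟨z, fun i => ?_⟩
  rw [tendsto_pi_nhds]
  intro l
  have h1 := ((EuclideanSpace.proj ((i, l) : Fin m × Fin n)).continuous.tendsto Xinf).comp hXlim
  have h2 : Xinf (i, l) = z l := by
    have := hz i
    calc Xinf (i, l) = stmt6rowv Xinf i l := rfl
      _ = z l := by rw [this]
  rw [← h2]; exact h1
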